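/- Let φ = P₁⋯Pₙλ be a hybrid formula where each P_i is an operator from {◇,□} ∪ {↓x. : x a state variable}, and λ is one of: a proposition p, a negated proposition ¬p, a nominal n, a negated nominal ¬n, a state variable x, ⊤, ⊥, or a negated state variable ¬x where x is NOT bound by any binder ↓x. among P₁,…,Pₙ. Then φ is unsatisfiable over the class of total frames if and only if λ = ⊥, and φ is unsatisfiable over the class of ER frames if and only if λ = ⊥. -/

import Mathlib

/-- Hybrid logic formulas over countable sets of atomic propositions,
nominals and state variables (each indexed by `ℕ`). -/
inductive HForm : Type where
  | prop : ℕ → HForm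
  | nom  : ℕ → HForm
  | svar : ℕ → HForm
  | top  : HForm
  | bot  : HForm
  | neg  : HForm → HForm
  | and  : HForm → HForm → HForm
  | or   : HForm → HForm → HForm
  | dia  : HForm → HForm
  | box  : HForm → HForm
  | bind : ℕ → HForm → HForm
  | atN  : ℕ → HForm → HForm
  | atV  : ℕ → HForm → HForm
deriving DecidableEq

/-- A (hybrid) Kripke structure: states, transition relation, labeling of
propositions by sets of states and of nominals by (single) states. -/
structure Kripke (W : Type) where
  rel : W → W → Prop
  vProp : ℕ → Set W
  vNom : ℕ → W

/-- Update of an assignment: `updAsg g x w` is the `x`-variant of `g` mapping `x` to `w`. -/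
def updAsg {W : Type} (g : ℕ → W) (x : ℕ) (w : W) : ℕ → W :=
  fun y => if y = x then w else g y

/-- The satisfaction relation `K, g, w ⊨ φ`. -/
def Sat {W : Type} (K : Kripke W) : (ℕ → W) → W → HForm → Prop
  | _, w, .prop p => w ∈ K.vProp p
  | _, w, .nom i => w = K.vNom i
  | g, w, .svar x => w = g x
  | _, _, .top => True
  | _, _, .bot => False
  | g, w, .neg φ => ¬ Sat K g w φ
  | g, w, .and φ ψ => Sat K g w φ ∧ Sat K g w ψ
  | g, w, .or φ ψ => Sat K g w φ ∨ Sat K g w ψ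
  | g, w, .dia φ => ∃ v, K.rel w v ∧ Sat K g v φ
  | g, w, .box φ => ∀ v, K.rel w v → Sat K g v φ
  | g, w, .bind x φ => Sat K (updAsg g x w) w φ
  | g, _, .atN i φ => Sat K g (K.vNom i) φ
  | g, _, .atV x φ => Sat K g (g x) φ

/-- Satisfiability over the class of all frames. -/
def SatisfiableAll (φ : HForm) : Prop :=
  ∃ (W : Type) (K : Kripke W) (g : ℕ → W) (w : W), Sat K g w φ

/-- Satisfiability over the class of transitive frames. -/
def SatisfiableTrans (φ : HForm) : Prop :=
  ∃ (W : Type) (K : Kripke W), Transitive K.rel ∧ ∃ (g : ℕ → W) (w : W), Sat K g w φ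

/-- Satisfiability over the class of total frames. -/
def SatisfiableTotal (φ : HForm) : Prop :=
  ∃ (W : Type) (K : Kripke W), (∀ w, ∃ v, K.rel w v) ∧ ∃ (g : ℕ → W) (w : W), Sat K g w φ

/-- Satisfiability over the class of ER frames. -/
def SatisfiableER (φ : HForm) : Prop :=
  ∃ (W : Type) (K : Kripke W), Equivalence K.rel ∧ ∃ (g : ℕ → W) (w : W), Sat K g w φ

/-- The singleton reflexive Kripke structure `K₁` labeling every proposition and
nominal with its unique state. -/
def K1 : Kripke Unit := ⟨fun _ _ => True, fun _ => Set.univ, fun _ => ()⟩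

/-- The assignment `g₁` mapping every state variable to the unique state of `K₁`. -/
def g1 : ℕ → Unit := fun _ => ()

/-- Unary operators of hybrid logic: `◇`, `□`, `↓x.`, `@_i` (nominal), `@_x` (state variable). -/
inductive HOp : Type where
  | dia : HOp
  | box : HOp
  | bind : ℕ → HOp
  | atN : ℕ → HOp
  | atV : ℕ → HOp
deriving DecidableEq

def applyOp : HOp → HForm → HForm
  | .dia, φ => .dia φ
  | .box, φ => .box φ
  | .bind x, φ => .bind x φ
  | .atN i, φ => .atN i φ
  | .atV x, φ => .atV x φ

/-- Apply a sequence of operators to a formula (head of the list outermost). -/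
def applyOps : List HOp → HForm → HForm
  | [], φ => φ
  | o :: os, φ => applyOp o (applyOps os φ)

/-- The operator is `◇`, `□` or a binder `↓y.` (no satisfaction operators). -/
def IsModalOrBind : HOp → Prop
  | .dia => True
  | .box => True
  | .bind _ => True
  | _ => False

/-- `λ` is a proposition, a negated proposition, a nominal, a negated nominal, a state
variable, `⊤`, `⊥`, or a negated state variable `¬x` with `x` not bound by any binder
`↓x.` occurring among the operators `ops`. -/
def GoodLeaf (ops : List HOp) : HForm → Prop
  | .prop _ => True
  | .neg (.prop _) => True
  | .nom _ => True
  | .neg (.nom _) => True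
  | .svar _ => True
  | .top => True
  | .bot => True
  | .neg (.svar x) => HOp.bind x ∉ ops
  | _ => False

/-- Over a total frame, any chain of modal/bind operators applied to `⊥` is false. -/
lemma unsat_bot {W : Type} (K : Kripke W) (ht : ∀ w, ∃ v, K.rel w v) :
    ∀ ops : List HOp, (∀ o ∈ ops, IsModalOrBind o) →
      ∀ (g : ℕ → W) (w : W), ¬ Sat K g w (applyOps ops HForm.bot) := by
  intro ops
  induction ops with
  | nil => intro _ g w h; exact h
  | cons o os ih =>
    intro hops g w h
    have hos : ∀ o ∈ os, IsModalOrBind o := fun o ho => hops o (List.mem_cons_of_mem _ ho)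
    have ho := hops o (List.mem_cons_self)
    cases o with
    | dia => obtain ⟨v, _, hv⟩ := h; exact ih hos g v hv
    | box => obtain ⟨v, hv⟩ := ht w; exact ih hos g v (h v hv)
    | bind x => exact ih hos _ w h
    | atN i => exact ho
    | atV x => exact ho

/-- On an identity-relation model, a leaf true at `w` under all assignments stays true
under any chain of modal/bind operators. -/
lemma sat_chain {W : Type} (K : Kripke W) (hrel : ∀ a b, K.rel a b ↔ a = b) (w : W)
    (lam : HForm) (H : ∀ g, Sat K g w lam) :
    ∀ ops : List HOp, (∀ o ∈ ops, IsModalOrBind o) →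
      ∀ g, Sat K g w (applyOps ops lam) := by
  intro ops
  induction ops with
  | nil => intro _ g; exact H g
  | cons o os ih =>
    intro hops g
    have hos : ∀ o ∈ os, IsModalOrBind o := fun o ho => hops o (List.mem_cons_of_mem _ ho)
    have ho := hops o (List.mem_cons_self)
    cases o with
    | dia => exact ⟨w, (hrel w w).2 rfl, ih hos g⟩
    | box =>
      intro v hv
      have : w = v := (hrel w v).1 hv
      subst this
      exact ih hos g
    | bind x => exact ih hos _
    | atN i => exact ho.elim
    | atV x => exact ho.elim

/-- On an identity-relation model, `¬x` (x unbound in the chain) stays true under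
any chain of modal/bind operators, provided `g x ≠ w`. -/
lemma sat_chain_negsvar {W : Type} (K : Kripke W) (hrel : ∀ a b, K.rel a b ↔ a = b)
    (w : W) (x : ℕ) :
    ∀ ops : List HOp, (∀ o ∈ ops, IsModalOrBind o) → HOp.bind x ∉ ops →
      ∀ g, g x ≠ w → Sat K g w (applyOps ops (HForm.neg (HForm.svar x))) := by
  intro ops
  induction ops with
  | nil => intro _ _ g hg h; exact hg h.symm
  | cons o os ih =>
    intro hops hnb g hg
    have hos : ∀ o ∈ os, IsModalOrBind o := fun o ho => hops o (List.mem_cons_of_mem _ ho)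
    have hnb' : HOp.bind x ∉ os := fun h => hnb (List.mem_cons_of_mem _ h)
    have ho := hops o (List.mem_cons_self)
    cases o with
    | dia => exact ⟨w, (hrel w w).2 rfl, ih hos hnb' g hg⟩
    | box =>
      intro v hv
      have : w = v := (hrel w v).1 hv
      subst this
      exact ih hos hnb' g hg
    | bind y =>
      have hxy : y ≠ x := by
        intro h; subst h; exact hnb (List.mem_cons_self)
      refine ih hos hnb' _ ?_
      simp only [updAsg]
      rw [if_neg (fun h : x = y => hxy h.symm)]
      exact hg
    | atN i => exact ho.elim
    | atV y => exact ho.elim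

/-- From truth in an identity-relation model, satisfiability over both classes. -/
lemma sat_both {W : Type} (K : Kripke W) (hrel : ∀ a b, K.rel a b ↔ a = b)
    (g : ℕ → W) (w : W) (φ : HForm) (h : Sat K g w φ) :
    SatisfiableTotal φ ∧ SatisfiableER φ := by
  refine ⟨⟨W, K, fun v => ⟨v, (hrel v v).2 rfl⟩, g, w, h⟩, ⟨W, K, ?_, g, w, h⟩⟩
  exact ⟨fun a => (hrel a a).2 rfl,
    fun hab => (hrel _ _).2 ((hrel _ _).1 hab).symm,
    fun hab hbc => (hrel _ _).2 (((hrel _ _).1 hab).trans ((hrel _ _).1 hbc))⟩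

def KU : Kripke Unit := ⟨Eq, fun _ => Set.univ, fun _ => ()⟩
def KU0 : Kripke Unit := ⟨Eq, fun _ => ∅, fun _ => ()⟩
def KB : Kripke Bool := ⟨Eq, fun _ => Set.univ, fun _ => true⟩

/-- For `φ = P₁⋯Pₙλ` with each `Pᵢ ∈ {◇,□} ∪ {↓x.}` and `λ` a
(possibly negated) proposition, nominal, `⊤`, `⊥`, a state variable, or a negated
state variable not bound in `φ`: `φ` is unsatisfiable over the class of total frames
iff `λ = ⊥`, and likewise over the class of ER frames. -/
theorem unsat_total_ER_iff_bot (ops : List HOp) (lam : HForm)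
    (hops : ∀ o ∈ ops, IsModalOrBind o) (hlam : GoodLeaf ops lam) :
    (¬ SatisfiableTotal (applyOps ops lam) ↔ lam = HForm.bot) ∧
    (¬ SatisfiableER (applyOps ops lam) ↔ lam = HForm.bot) := by

  have hsat : lam ≠ HForm.bot → SatisfiableTotal (applyOps ops lam) ∧ SatisfiableER (applyOps ops lam) := by
    intro hne
    cases lam with
    | prop p =>
      exact sat_both KU (fun a b => Iff.rfl) (fun _ => ()) () _
        (sat_chain KU (fun a b => Iff.rfl) () (.prop p) (fun g => Set.mem_univ _) ops hops (fun _ => ()))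
    | nom i =>
      exact sat_both KU (fun a b => Iff.rfl) (fun _ => ()) () _
        (sat_chain KU (fun a b => Iff.rfl) () (.nom i) (fun g => rfl) ops hops (fun _ => ()))
    | svar x =>
      exact sat_both KU (fun a b => Iff.rfl) (fun _ => ()) () _
        (sat_chain KU (fun a b => Iff.rfl) () (.svar x) (fun g => rfl) ops hops (fun _ => ()))
    | top =>
      exact sat_both KU (fun a b => Iff.rfl) (fun _ => ()) () _
        (sat_chain KU (fun a b => Iff.rfl) () .top (fun g => trivial) ops hops (fun _ => ()))
    | bot => exact absurd rfl hne
    | neg ψ =>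
      cases ψ with
      | prop p =>
        exact sat_both KU0 (fun a b => Iff.rfl) (fun _ => ()) () _
          (sat_chain KU0 (fun a b => Iff.rfl) () (.neg (.prop p)) (fun g h => h) ops hops (fun _ => ()))
      | nom i =>
        exact sat_both KB (fun a b => Iff.rfl) (fun _ => true) false _
          (sat_chain KB (fun a b => Iff.rfl) false (.neg (.nom i))
            (fun g h => Bool.false_ne_true h) ops hops (fun _ => true))
      | svar x =>
        have hnb : HOp.bind x ∉ ops := hlam
        exact sat_both KB (fun a b => Iff.rfl) (fun _ => true) false _
          (sat_chain_negsvar KB (fun a b => Iff.rfl) false x ops hops hnb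
            (fun _ => true) (fun h => Bool.noConfusion h))
      | top => exact hlam.elim
      | bot => exact hlam.elim
      | neg _ => exact hlam.elim
      | and _ _ => exact hlam.elim
      | or _ _ => exact hlam.elim
      | dia _ => exact hlam.elim
      | box _ => exact hlam.elim
      | bind _ _ => exact hlam.elim
      | atN _ _ => exact hlam.elim
      | atV _ _ => exact hlam.elim
    | and _ _ => exact hlam.elim
    | or _ _ => exact hlam.elim
    | dia _ => exact hlam.elim
    | box _ => exact hlam.elim
    | bind _ _ => exact hlam.elim
    | atN _ _ => exact hlam.elim
    | atV _ _ => exact hlam.elim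
  constructor
  · constructor
    · intro hunsat
      by_contra hne
      exact hunsat (hsat hne).1
    · rintro rfl
      rintro ⟨W, K, ht, g, w, h⟩
      exact unsat_bot K ht ops hops g w h
  · constructor
    · intro hunsat
      by_contra hne
      exact hunsat (hsat hne).2
    · rintro rfl
      rintro ⟨W, K, heq, g, w, h⟩
      exact unsat_bot K (fun v => ⟨v, heq.refl v⟩) ops hops g w h
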